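/- Let X be an order-N real tensor with dimensions s₁×⋯×s_N, let G be an order-N tensor with dimensions R₁×⋯×R_N where R_l ≤ s_l for every l, and for each l ∈ {1,…,N} let A^{(l)} ∈ ℝ^{s_l×R_l} have orthonormal columns. Let X̃ = G ×₁ A^{(1)} ×₂ ⋯ ×_N A^{(N)} and suppose ‖X − X̃‖₂ ≤ (1/3)‖X‖₂. Let Y^{(1)} = X ×₂ A^{(2)ᵀ} ⋯ ×_N A^{(N)ᵀ}, and for distinct i, j ∈ {2,…,N} let Y^{(i,j,1)} be X contracted in mode l with A^{(l)ᵀ} for every l ∈ {2,…,N}∖{i,j}. Then ‖Y^{(1)}‖₂ ≥ (1/3)‖X‖₂ and ‖Y^{(i,j,1)}‖₂ ≤ (5/3)‖X‖₂, where ‖·‖₂ denotes the tensor spectral norm. -/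

import Mathlib

open scoped BigOperators

/-- Euclidean (ℓ²) norm of a vector. -/
noncomputable def vnorm {n : ℕ} (v : Fin n → ℝ) : ℝ := Real.sqrt (∑ i, v i ^ 2)

/-- Frobenius norm: the ℓ² norm of all entries. -/
noncomputable def fnorm {ι : Type*} [Fintype ι] (T : ι → ℝ) : ℝ := Real.sqrt (∑ i, T i ^ 2)

/-- Matrix–vector product. -/
noncomputable def matvec {m n : ℕ} (M : Fin m → Fin n → ℝ) (x : Fin n → ℝ) : Fin m → ℝ :=
  fun i => ∑ j, M i j * x j

/-- Matrix–matrix product. -/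
noncomputable def matmul {m n p : ℕ} (A : Fin m → Fin n → ℝ) (B : Fin n → Fin p → ℝ) :
    Fin m → Fin p → ℝ :=
  fun i j => ∑ k, A i k * B k j

/-- Matrix spectral norm. -/
noncomputable def mnorm {m n : ℕ} (M : Fin m → Fin n → ℝ) : ℝ :=
  sSup {r | ∃ x : Fin n → ℝ, vnorm x = 1 ∧ r = vnorm (matvec M x)}

/-- `I(M)`: the infimum of `‖Mx‖₂` over unit vectors `x`. -/
noncomputable def minf {m n : ℕ} (M : Fin m → Fin n → ℝ) : ℝ :=
  sInf {r | ∃ x : Fin n → ℝ, vnorm x = 1 ∧ r = vnorm (matvec M x)}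

/-- Matrix Frobenius norm. -/
noncomputable def mfro {m n : ℕ} (M : Fin m → Fin n → ℝ) : ℝ :=
  Real.sqrt (∑ i, ∑ j, M i j ^ 2)

/-- The multilinear map `g_T` associated to an order-`(d+1)` tensor `T`;
mode `0` is the output mode, modes `1,…,d` are the input modes. -/
noncomputable def gmap {d : ℕ} {s : Fin (d+1) → ℕ} (T : (∀ i, Fin (s i)) → ℝ)
    (x : ∀ i, Fin (s i) → ℝ) : Fin (s 0) → ℝ :=
  fun i₁ => ∑ j : (∀ i, Fin (s i)),
    if j 0 = i₁ then T j * ∏ k ∈ Finset.univ.erase (0 : Fin (d+1)), x k (j k) else 0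

/-- The inputs `x i`, `i ≠ 0`, are all unit vectors. -/
def unitInputs {d : ℕ} {s : Fin (d+1) → ℕ} (x : ∀ i, Fin (s i) → ℝ) : Prop :=
  ∀ i : Fin (d+1), i ≠ 0 → vnorm (x i) = 1

/-- Tensor spectral norm: supremum of `‖g_T(x₂,…,x_N)‖₂` over unit inputs. -/
noncomputable def tnorm {d : ℕ} {s : Fin (d+1) → ℕ} (T : (∀ i, Fin (s i)) → ℝ) : ℝ :=
  sSup {r | ∃ x : (∀ i, Fin (s i) → ℝ), unitInputs x ∧ r = vnorm (gmap T x)}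

/-- `I(T)`: infimum of `‖g_T(x₂,…,x_N)‖₂` over unit inputs. -/
noncomputable def tinf {d : ℕ} {s : Fin (d+1) → ℕ} (T : (∀ i, Fin (s i)) → ℝ) : ℝ :=
  sInf {r | ∃ x : (∀ i, Fin (s i) → ℝ), unitInputs x ∧ r = vnorm (gmap T x)}

/-- Tensor condition number `κ(T) = ‖T‖₂ / I(T)`. -/
noncomputable def tcond {d : ℕ} {s : Fin (d+1) → ℕ} (T : (∀ i, Fin (s i)) → ℝ) : ℝ :=
  tnorm T / tinf T

/-- Dimensions after replacing the size of mode `n` by `J`. -/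
def repl {d : ℕ} (s : Fin (d+1) → ℕ) (n : Fin (d+1)) (J : ℕ) : Fin (d+1) → ℕ :=
  fun i => if i = n then J else s i

/-- Mode-`n` product `T ×ₙ A` with a matrix `A : Fin J → Fin (s n) → ℝ`:
`(T ×ₙ A)(i₁,…,a,…,i_N) = ∑ₖ T(i₁,…,k,…,i_N) A(a,k)`. -/
noncomputable def modeProd {d : ℕ} {s : Fin (d+1) → ℕ} (T : (∀ i, Fin (s i)) → ℝ)
    (n : Fin (d+1)) {J : ℕ} (A : Fin J → Fin (s n) → ℝ) :
    (∀ i, Fin (repl s n J i)) → ℝ :=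
  fun j => ∑ k : Fin (s n),
    T (fun i => if h : i = n then Fin.cast (congrArg s h.symm) k
        else Fin.cast (show repl s n J i = s i by simp [repl, h]) (j i)) *
      A (Fin.cast (show repl s n J n = J by simp [repl]) (j n)) k

/-- Multilinear transformation of a tensor: `multiProd X B = X ×₁ B₁ ×₂ ⋯ ×_N B_N`. -/
noncomputable def multiProd {d : ℕ} {s R : Fin (d+1) → ℕ}
    (X : (∀ i, Fin (s i)) → ℝ) (B : ∀ l, Fin (R l) → Fin (s l) → ℝ) :
    (∀ l, Fin (R l)) → ℝ :=
  fun j => ∑ k : (∀ l, Fin (s l)), X k * ∏ l, B l (j l) (k l)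

/-- Dimensions of `partialContract`: modes in `E` are kept at size `s l`,
the other modes are contracted down to size `R l`. -/
def keepDims {d : ℕ} (s R : Fin (d+1) → ℕ) (E : Finset (Fin (d+1))) : Fin (d+1) → ℕ :=
  fun l => if l ∈ E then s l else R l

/-- Contract every mode `l ∉ E` of `X` with `(A l)ᵀ`; keep the modes in `E` untouched. -/
noncomputable def partialContract {d : ℕ} {s R : Fin (d+1) → ℕ}
    (X : (∀ i, Fin (s i)) → ℝ) (A : ∀ l, Fin (s l) → Fin (R l) → ℝ)
    (E : Finset (Fin (d+1))) : (∀ l, Fin (keepDims s R E l)) → ℝ :=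
  multiProd X (fun l a b =>
    if h : l ∈ E then
      (if b = Fin.cast (show keepDims s R E l = s l by simp [keepDims, h]) a then (1:ℝ) else 0)
    else A l b (Fin.cast (show keepDims s R E l = R l by simp [keepDims, h]) a))


/-! ### Auxiliary lemmas -/

section Aux

open Finset

lemma vnorm_eq_norm {n : ℕ} (v : Fin n → ℝ) :
    vnorm v = ‖(WithLp.equiv 2 (Fin n → ℝ)).symm v‖ := by
  rw [EuclideanSpace.norm_eq]
  simp [vnorm, sq_abs]

lemma vnorm_nonneg {n : ℕ} (v : Fin n → ℝ) : 0 ≤ vnorm v := Real.sqrt_nonneg _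

lemma vnorm_add_le {n : ℕ} (u v : Fin n → ℝ) :
    vnorm (fun i => u i + v i) ≤ vnorm u + vnorm v := by
  rw [vnorm_eq_norm, vnorm_eq_norm, vnorm_eq_norm]
  exact norm_add_le ((WithLp.equiv 2 (Fin n → ℝ)).symm u) ((WithLp.equiv 2 (Fin n → ℝ)).symm v)

lemma vnorm_smul {n : ℕ} (c : ℝ) (v : Fin n → ℝ) :
    vnorm (fun i => c * v i) = |c| * vnorm v := by
  rw [vnorm_eq_norm, vnorm_eq_norm]
  exact norm_smul c ((WithLp.equiv 2 (Fin n → ℝ)).symm v)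

lemma eq_zero_of_vnorm_eq_zero {n : ℕ} {v : Fin n → ℝ} (h : vnorm v = 0) : v = 0 := by
  have h2 : (∑ i, v i ^ 2) = 0 := by
    have h' := Real.sqrt_eq_zero'.mp h
    have : 0 ≤ ∑ i, v i ^ 2 := Finset.sum_nonneg fun i _ => sq_nonneg _
    linarith
  funext i
  have := (Finset.sum_eq_zero_iff_of_nonneg (fun i _ => sq_nonneg (v i))).mp h2 i (Finset.mem_univ i)
  exact pow_eq_zero_iff (by norm_num) |>.mp this

lemma vnorm_comp_cast {n m : ℕ} (h : n = m) (v : Fin m → ℝ) :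
    vnorm (fun i : Fin n => v (Fin.cast h i)) = vnorm v := by
  unfold vnorm
  congr 1
  exact Fintype.sum_equiv (finCongr h) _ _ (fun i => rfl)

lemma tnorm_nonneg' {d : ℕ} {s : Fin (d+1) → ℕ} (T : (∀ i, Fin (s i)) → ℝ) : 0 ≤ tnorm T :=
  Real.sSup_nonneg fun _ h => by obtain ⟨x, _, rfl⟩ := h; exact vnorm_nonneg _

lemma abs_le_one_of_unit {n : ℕ} {v : Fin n → ℝ} (h : vnorm v = 1) (i : Fin n) : |v i| ≤ 1 := by
  rw [← sq_le_one_iff_abs_le_one]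
  have h1 : (∑ j, v j ^ 2) = 1 := by
    have := congrArg (· ^ 2) h
    simpa [vnorm, Real.sq_sqrt (Finset.sum_nonneg fun j _ => sq_nonneg (v j))] using this
  calc v i ^ 2 ≤ ∑ j, v j ^ 2 :=
        Finset.single_le_sum (fun j _ => sq_nonneg (v j)) (Finset.mem_univ i)
    _ = 1 := h1

lemma gmap_abs_le {d : ℕ} {s : Fin (d+1) → ℕ} (T : (∀ i, Fin (s i)) → ℝ)
    {x : ∀ i, Fin (s i) → ℝ} (hx : unitInputs x) (i : Fin (s 0)) :
    |gmap T x i| ≤ ∑ j : (∀ i, Fin (s i)), |T j| := by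
  refine (Finset.abs_sum_le_sum_abs _ _).trans (Finset.sum_le_sum fun j _ => ?_)
  by_cases h : j 0 = i
  · simp only [h, if_true, abs_mul]
    calc |T j| * |∏ k ∈ Finset.univ.erase (0 : Fin (d+1)), x k (j k)|
        ≤ |T j| * 1 := by
          refine mul_le_mul_of_nonneg_left ?_ (abs_nonneg _)
          rw [Finset.abs_prod]
          exact Finset.prod_le_one (fun k _ => abs_nonneg _)
            (fun k hk => abs_le_one_of_unit (hx k (Finset.ne_of_mem_erase hk)) _)
      _ = |T j| := mul_one _
  · simp [h]

lemma vnorm_le_of_abs_le {n : ℕ} {v : Fin n → ℝ} {C : ℝ} (hC : 0 ≤ C)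
    (h : ∀ i, |v i| ≤ C) : vnorm v ≤ Real.sqrt n * C := by
  have h1 : vnorm v ≤ Real.sqrt (∑ _i : Fin n, C ^ 2) := by
    apply Real.sqrt_le_sqrt
    exact Finset.sum_le_sum fun i _ => by
      calc v i ^ 2 = |v i| ^ 2 := (sq_abs _).symm
        _ ≤ C ^ 2 := pow_le_pow_left₀ (abs_nonneg _) (h i) 2
  refine h1.trans ?_
  rw [Finset.sum_const, Finset.card_univ, Fintype.card_fin, nsmul_eq_mul,
    Real.sqrt_mul (by positivity), Real.sqrt_sq hC]

lemma tnorm_bddAbove {d : ℕ} {s : Fin (d+1) → ℕ} (T : (∀ i, Fin (s i)) → ℝ) :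
    BddAbove {r | ∃ x : (∀ i, Fin (s i) → ℝ), unitInputs x ∧ r = vnorm (gmap T x)} := by
  refine ⟨Real.sqrt (s 0) * ∑ j : (∀ i, Fin (s i)), |T j|, ?_⟩
  rintro r ⟨x, hx, rfl⟩
  exact vnorm_le_of_abs_le (Finset.sum_nonneg fun j _ => abs_nonneg _) (gmap_abs_le T hx)

lemma le_tnorm {d : ℕ} {s : Fin (d+1) → ℕ} (T : (∀ i, Fin (s i)) → ℝ)
    {x : ∀ i, Fin (s i) → ℝ} (hx : unitInputs x) : vnorm (gmap T x) ≤ tnorm T :=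
  le_csSup (tnorm_bddAbove T) ⟨x, hx, rfl⟩

lemma gmap_congr_right {d : ℕ} {s : Fin (d+1) → ℕ} (T : (∀ i, Fin (s i)) → ℝ)
    {x y : ∀ i, Fin (s i) → ℝ} (h : ∀ l : Fin (d+1), l ≠ 0 → x l = y l) :
    gmap T x = gmap T y := by
  funext i
  unfold gmap
  refine Finset.sum_congr rfl fun j _ => ?_
  congr 1
  congr 1
  exact Finset.prod_congr rfl fun k hk => by rw [h k (Finset.ne_of_mem_erase hk)]

lemma vnorm_gmap_le_of_subunit {d : ℕ} {s : Fin (d+1) → ℕ} (T : (∀ i, Fin (s i)) → ℝ)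
    {z : ∀ i, Fin (s i) → ℝ} (hz : ∀ l : Fin (d+1), l ≠ 0 → vnorm (z l) ≤ 1) :
    vnorm (gmap T z) ≤ tnorm T := by
  by_cases h0 : ∀ l : Fin (d+1), l ≠ 0 → vnorm (z l) ≠ 0
  · set w : ∀ i, Fin (s i) → ℝ := fun l m => (vnorm (z l))⁻¹ * z l m with hw
    have hunit : unitInputs w := by
      intro l hl
      have : vnorm (w l) = |(vnorm (z l))⁻¹| * vnorm (z l) := vnorm_smul _ _
      rw [this, abs_of_nonneg (inv_nonneg.mpr (vnorm_nonneg _)),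
        inv_mul_cancel₀ (h0 l hl)]
    have key : ∀ i, gmap T z i =
        (∏ l ∈ Finset.univ.erase (0 : Fin (d+1)), vnorm (z l)) * gmap T w i := by
      intro i
      unfold gmap
      rw [Finset.mul_sum]
      refine Finset.sum_congr rfl fun j _ => ?_
      by_cases hji : j 0 = i
      · simp only [hji, if_true]
        have : ∏ k ∈ Finset.univ.erase (0 : Fin (d+1)), z k (j k) =
            (∏ l ∈ Finset.univ.erase (0 : Fin (d+1)), vnorm (z l)) *
              ∏ k ∈ Finset.univ.erase (0 : Fin (d+1)), w k (j k) := by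
          rw [← Finset.prod_mul_distrib]
          refine Finset.prod_congr rfl fun k hk => ?_
          rw [hw]
          field_simp [h0 k (Finset.ne_of_mem_erase hk)]
        rw [this]; ring
      · simp [hji]
    have hvn : vnorm (gmap T z) =
        (∏ l ∈ Finset.univ.erase (0 : Fin (d+1)), vnorm (z l)) * vnorm (gmap T w) := by
      have h2 := vnorm_smul (∏ l ∈ Finset.univ.erase (0 : Fin (d+1)), vnorm (z l)) (gmap T w)
      rw [abs_of_nonneg (Finset.prod_nonneg fun l _ => vnorm_nonneg _)] at h2
      rw [← h2]
      congr 1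
      funext i; exact key i
    rw [hvn]
    calc _ ≤ 1 * tnorm T := by
          refine mul_le_mul ?_ (le_tnorm T hunit) (vnorm_nonneg _) zero_le_one
          exact Finset.prod_le_one (fun l _ => vnorm_nonneg _)
            (fun l hl => hz l (Finset.ne_of_mem_erase hl))
      _ = tnorm T := one_mul _
  · push_neg at h0
    obtain ⟨l, hl, hzl⟩ := h0
    have hzl0 : z l = 0 := eq_zero_of_vnorm_eq_zero hzl
    have hz0 : gmap T z = fun _ => 0 := by
      funext i
      unfold gmap
      refine Finset.sum_eq_zero fun j _ => ?_
      by_cases hji : j 0 = i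
      · simp only [hji, if_true]
        have : ∏ k ∈ Finset.univ.erase (0 : Fin (d+1)), z k (j k) = 0 :=
          Finset.prod_eq_zero (Finset.mem_erase.mpr ⟨hl, Finset.mem_univ l⟩)
            (by rw [hzl0]; rfl)
        rw [this, mul_zero]
      · simp [hji]
    rw [hz0]
    have : vnorm (fun _ : Fin (s 0) => (0:ℝ)) = 0 := by simp [vnorm]
    rw [this]; exact tnorm_nonneg' T

lemma gmap_add {d : ℕ} {s : Fin (d+1) → ℕ} (U V : (∀ i, Fin (s i)) → ℝ)
    (x : ∀ i, Fin (s i) → ℝ) :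
    gmap (fun k => U k + V k) x = fun i => gmap U x i + gmap V x i := by
  funext i
  unfold gmap
  rw [← Finset.sum_add_distrib]
  refine Finset.sum_congr rfl fun j _ => ?_
  by_cases hji : j 0 = i <;> simp [hji, add_mul]

lemma tnorm_add_le {d : ℕ} {s : Fin (d+1) → ℕ} (U V : (∀ i, Fin (s i)) → ℝ) :
    tnorm (fun k => U k + V k) ≤ tnorm U + tnorm V := by
  refine Real.sSup_le ?_ (add_nonneg (tnorm_nonneg' U) (tnorm_nonneg' V))
  rintro r ⟨x, hx, rfl⟩
  rw [gmap_add]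
  exact (vnorm_add_le _ _).trans (add_le_add (le_tnorm U hx) (le_tnorm V hx))

lemma tnorm_neg {d : ℕ} {s : Fin (d+1) → ℕ} (V : (∀ i, Fin (s i)) → ℝ) :
    tnorm (fun k => -V k) = tnorm V := by
  have habs : ∀ (W : (∀ i, Fin (s i)) → ℝ) (x : ∀ i, Fin (s i) → ℝ),
      vnorm (gmap (fun k => -W k) x) = vnorm (gmap W x) := by
    intro W x
    have : gmap (fun k => -W k) x = fun i => -1 * gmap W x i := by
      funext i
      unfold gmap
      rw [Finset.mul_sum]
      refine Finset.sum_congr rfl fun j _ => ?_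
      by_cases hji : j 0 = i <;> simp [hji]
    rw [this, vnorm_smul]; norm_num
  unfold tnorm
  congr 1
  ext r
  constructor <;> rintro ⟨x, hx, rfl⟩
  · exact ⟨x, hx, (habs V x)⟩
  · exact ⟨x, hx, (habs V x).symm⟩

lemma sum_if_prod {d : ℕ} {u : Fin (d+1) → ℕ} (f : ∀ l, Fin (u l) → ℝ) (i : Fin (u 0)) :
    (∑ j : (∀ l, Fin (u l)), if j 0 = i then ∏ l ∈ univ.erase (0 : Fin (d+1)), f l (j l) else 0)
      = ∏ l ∈ univ.erase (0 : Fin (d+1)), ∑ a, f l a := by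
  classical
  set g : ∀ l, Fin (u l) → ℝ :=
    Function.update f 0 (fun a => if a = i then 1 else 0) with hg
  have hgsum : (∑ j : (∀ l, Fin (u l)), ∏ l, g l (j l)) = ∏ l, ∑ a, g l a := by
    rw [Finset.prod_univ_sum (fun _ => univ) g]
    rw [Fintype.piFinset_univ]
  have h1 : ∀ j : (∀ l, Fin (u l)),
      (if j 0 = i then ∏ l ∈ univ.erase (0 : Fin (d+1)), f l (j l) else 0)
        = ∏ l, g l (j l) := by
    intro j
    rw [← Finset.mul_prod_erase univ (fun l => g l (j l)) (mem_univ (0 : Fin (d+1)))]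
    have hg0 : g 0 (j 0) = if j 0 = i then 1 else 0 := by
      rw [hg, Function.update_self]
    have hgl : ∏ l ∈ univ.erase (0 : Fin (d+1)), g l (j l)
        = ∏ l ∈ univ.erase (0 : Fin (d+1)), f l (j l) := by
      refine Finset.prod_congr rfl fun l hl => ?_
      rw [hg, Function.update_of_ne (Finset.ne_of_mem_erase hl)]
    rw [hg0, hgl]
    by_cases hji : j 0 = i <;> simp [hji]
  have h2 : (∏ l, ∑ a, g l a) = ∏ l ∈ univ.erase (0 : Fin (d+1)), ∑ a, f l a := by
    rw [← Finset.mul_prod_erase univ (fun l => ∑ a, g l a) (mem_univ (0 : Fin (d+1)))]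
    have hg0 : (∑ a, g 0 a) = 1 := by
      rw [hg]; simp [Function.update_self]
    have hgl : ∏ l ∈ univ.erase (0 : Fin (d+1)), ∑ a, g l a
        = ∏ l ∈ univ.erase (0 : Fin (d+1)), ∑ a, f l a := by
      refine Finset.prod_congr rfl fun l hl => ?_
      refine Finset.sum_congr rfl fun a _ => ?_
      rw [hg, Function.update_of_ne (Finset.ne_of_mem_erase hl)]
    rw [hg0, hgl, one_mul]
  calc (∑ j : (∀ l, Fin (u l)), if j 0 = i then ∏ l ∈ univ.erase (0 : Fin (d+1)), f l (j l) else 0)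
      = ∑ j : (∀ l, Fin (u l)), ∏ l, g l (j l) := Finset.sum_congr rfl fun j _ => h1 j
    _ = ∏ l, ∑ a, g l a := hgsum
    _ = _ := h2

/-- Master computation lemma. -/
lemma gmap_multiProd {d : ℕ} {t u : Fin (d+1) → ℕ} (X : (∀ i, Fin (t i)) → ℝ)
    (B : ∀ l, Fin (u l) → Fin (t l) → ℝ) (x : ∀ l, Fin (u l) → ℝ) :
    gmap (multiProd X B) x
      = matvec (B 0) (gmap X (fun l b => ∑ a, B l a b * x l a)) := by
  classical
  funext i
  have lhs_eq : gmap (multiProd X B) x i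
      = ∑ k : (∀ l, Fin (t l)), X k * (B 0 i (k 0) *
          ∏ l ∈ univ.erase (0 : Fin (d+1)), ∑ a, B l a (k l) * x l a) := by
    unfold gmap multiProd
    have step1 : ∀ j : (∀ l, Fin (u l)),
        (if j 0 = i then (∑ k : (∀ l, Fin (t l)), X k * ∏ l, B l (j l) (k l)) *
            ∏ l ∈ univ.erase (0 : Fin (d+1)), x l (j l) else 0)
        = ∑ k : (∀ l, Fin (t l)), (X k * B 0 i (k 0)) *
            (if j 0 = i then ∏ l ∈ univ.erase (0 : Fin (d+1)),
              (B l (j l) (k l) * x l (j l)) else 0) := by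
      intro j
      by_cases hji : j 0 = i
      · simp only [hji, if_true, Finset.sum_mul]
        refine Finset.sum_congr rfl fun k _ => ?_
        rw [← Finset.mul_prod_erase univ (fun l => B l (j l) (k l)) (mem_univ (0 : Fin (d+1))),
          Finset.prod_mul_distrib]
        rw [hji]
        ring
      · simp [hji]
    rw [Finset.sum_congr rfl fun j _ => step1 j, Finset.sum_comm]
    refine Finset.sum_congr rfl fun k _ => ?_
    rw [← Finset.mul_sum, sum_if_prod (fun l a => B l a (k l) * x l a) i]
    ring
  have rhs_eq : matvec (B 0) (gmap X (fun l b => ∑ a, B l a b * x l a)) i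
      = ∑ k : (∀ l, Fin (t l)), X k * (B 0 i (k 0) *
          ∏ l ∈ univ.erase (0 : Fin (d+1)), ∑ a, B l a (k l) * x l a) := by
    unfold matvec gmap
    simp only [Finset.mul_sum]
    rw [Finset.sum_comm]
    refine Finset.sum_congr rfl fun k _ => ?_
    simp only [mul_ite, mul_zero, Finset.sum_ite_eq, Finset.mem_univ, if_true]
    ring
  rw [lhs_eq, rhs_eq]

lemma orth_sum_sq {m n : ℕ} (A : Fin m → Fin n → ℝ)
    (hA : ∀ k k' : Fin n, ∑ i, A i k * A i k' = if k = k' then (1:ℝ) else 0)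
    (x : Fin n → ℝ) : ∑ i, (matvec A x i) ^ 2 = ∑ k, x k ^ 2 := by
  unfold matvec
  calc ∑ i, (∑ k, A i k * x k) ^ 2
      = ∑ i, ∑ k, ∑ k', (A i k * x k) * (A i k' * x k') := by
        refine Finset.sum_congr rfl fun i _ => ?_
        rw [pow_two, Finset.sum_mul_sum]
    _ = ∑ k, ∑ k', (x k * x k') * ∑ i, A i k * A i k' := by
        rw [Finset.sum_comm]
        refine Finset.sum_congr rfl fun k _ => ?_
        rw [Finset.sum_comm]
        refine Finset.sum_congr rfl fun k' _ => ?_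
        rw [Finset.mul_sum]
        exact Finset.sum_congr rfl fun i _ => by ring
    _ = ∑ k, x k ^ 2 := by
        refine Finset.sum_congr rfl fun k _ => ?_
        simp only [hA]
        simp [mul_ite, Finset.sum_ite_eq, pow_two]

lemma vnorm_matvec_orth {m n : ℕ} {A : Fin m → Fin n → ℝ}
    (hA : ∀ k k' : Fin n, ∑ i, A i k * A i k' = if k = k' then (1:ℝ) else 0)
    (x : Fin n → ℝ) : vnorm (matvec A x) = vnorm x := by
  unfold vnorm
  rw [orth_sum_sq A hA x]

lemma vnorm_transpose_le {m n : ℕ} {A : Fin m → Fin n → ℝ}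
    (hA : ∀ k k' : Fin n, ∑ i, A i k * A i k' = if k = k' then (1:ℝ) else 0)
    (x : Fin m → ℝ) : vnorm (fun b => ∑ a, A a b * x a) ≤ vnorm x := by
  set c : Fin n → ℝ := fun b => ∑ a, A a b * x a with hc
  set z : Fin m → ℝ := matvec A c with hz
  have key : ∑ b, c b ^ 2 = ∑ a, x a * z a := by
    calc ∑ b, c b ^ 2 = ∑ b, ∑ a, c b * (A a b * x a) := by
          refine Finset.sum_congr rfl fun b _ => ?_
          rw [pow_two, hc, Finset.mul_sum]
      _ = ∑ a, ∑ b, x a * (A a b * c b) := by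
          rw [Finset.sum_comm]
          exact Finset.sum_congr rfl fun a _ => Finset.sum_congr rfl fun b _ => by ring
      _ = ∑ a, x a * z a := by
          refine Finset.sum_congr rfl fun a _ => ?_
          rw [hz]
          unfold matvec
          rw [Finset.mul_sum]
  have hz2 : ∑ a, z a ^ 2 = ∑ b, c b ^ 2 := orth_sum_sq A hA c
  have cs : (∑ a, x a * z a) ^ 2 ≤ (∑ a, x a ^ 2) * ∑ a, z a ^ 2 :=
    Finset.sum_mul_sq_le_sq_mul_sq univ x z
  have hSnn : 0 ≤ ∑ b, c b ^ 2 := Finset.sum_nonneg fun b _ => sq_nonneg _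
  have hfinal : ∑ b, c b ^ 2 ≤ ∑ a, x a ^ 2 := by
    have hS : (∑ b, c b ^ 2) ^ 2 ≤ (∑ a, x a ^ 2) * ∑ b, c b ^ 2 := by
      rw [hz2] at cs
      calc (∑ b, c b ^ 2) ^ 2 = (∑ a, x a * z a) ^ 2 := by rw [key]
        _ ≤ (∑ a, x a ^ 2) * ∑ b, c b ^ 2 := cs
    rcases eq_or_lt_of_le hSnn with h | h
    · rw [← h]; exact Finset.sum_nonneg fun a _ => sq_nonneg _
    · nlinarith
  exact Real.sqrt_le_sqrt hfinal

/-- The matrix family used in `partialContract`. -/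
noncomputable def pcMat {d : ℕ} {s R : Fin (d+1) → ℕ}
    (A : ∀ l, Fin (s l) → Fin (R l) → ℝ) (E : Finset (Fin (d+1))) :
    ∀ l, Fin (keepDims s R E l) → Fin (s l) → ℝ :=
  fun l a b =>
    if h : l ∈ E then
      (if b = Fin.cast (show keepDims s R E l = s l by simp [keepDims, h]) a then (1:ℝ) else 0)
    else A l b (Fin.cast (show keepDims s R E l = R l by simp [keepDims, h]) a)

lemma partialContract_eq {d : ℕ} {s R : Fin (d+1) → ℕ}
    (X : (∀ i, Fin (s i)) → ℝ) (A : ∀ l, Fin (s l) → Fin (R l) → ℝ)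
    (E : Finset (Fin (d+1))) :
    partialContract X A E = multiProd X (pcMat A E) := rfl

lemma sum_ite_cast {n m : ℕ} (h : m = n) (x : Fin m → ℝ) (b : Fin n) :
    (∑ a : Fin m, (if b = Fin.cast h a then (1:ℝ) else 0) * x a) = x (Fin.cast h.symm b) := by
  have hiff : ∀ a : Fin m, (b = Fin.cast h a) ↔ (a = Fin.cast h.symm b) := by
    intro a
    constructor <;> intro hh
    · apply Fin.ext
      have := congrArg Fin.val hh
      simpa using this.symm
    · apply Fin.ext
      have := congrArg Fin.val hh
      simpa using this.symm
  calc (∑ a : Fin m, (if b = Fin.cast h a then (1:ℝ) else 0) * x a)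
      = ∑ a : Fin m, (if a = Fin.cast h.symm b then x a else 0) := by
        refine Finset.sum_congr rfl fun a _ => ?_
        by_cases hh : a = Fin.cast h.symm b
        · rw [if_pos ((hiff a).mpr hh), if_pos hh, one_mul]
        · rw [if_neg (fun hc => hh ((hiff a).mp hc)), if_neg hh, zero_mul]
    _ = x (Fin.cast h.symm b) := by
        rw [Finset.sum_ite_eq' univ (Fin.cast h.symm b) x]
        simp

lemma matvec_pcMat_zero {d : ℕ} {s R : Fin (d+1) → ℕ}
    (A : ∀ l, Fin (s l) → Fin (R l) → ℝ) {E : Finset (Fin (d+1))}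
    (h0 : (0 : Fin (d+1)) ∈ E) (v : Fin (s 0) → ℝ) :
    matvec (pcMat A E 0) v
      = fun i => v (Fin.cast (show keepDims s R E 0 = s 0 by simp [keepDims, h0]) i) := by
  funext i
  unfold matvec pcMat
  simp only [dif_pos h0]
  calc (∑ b, (if b = Fin.cast (show keepDims s R E 0 = s 0 by simp [keepDims, h0]) i
          then (1:ℝ) else 0) * v b)
      = ∑ b, (if b = Fin.cast (show keepDims s R E 0 = s 0 by simp [keepDims, h0]) i
          then v b else 0) := by
        refine Finset.sum_congr rfl fun b _ => ?_
        by_cases hh : b = Fin.cast (show keepDims s R E 0 = s 0 by simp [keepDims, h0]) i <;>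
          simp [hh]
    _ = _ := by
        rw [Finset.sum_ite_eq' univ _ v]
        simp

lemma vnorm_matvec_pcMat_zero {d : ℕ} {s R : Fin (d+1) → ℕ}
    (A : ∀ l, Fin (s l) → Fin (R l) → ℝ) {E : Finset (Fin (d+1))}
    (h0 : (0 : Fin (d+1)) ∈ E) (v : Fin (s 0) → ℝ) :
    vnorm (matvec (pcMat A E 0) v) = vnorm v := by
  rw [matvec_pcMat_zero A h0 v]
  exact vnorm_comp_cast _ v

/-- Monotonicity: contracting with orthonormal-column matrices does not
increase the spectral norm (output mode kept). -/
lemma tnorm_partialContract_le {d : ℕ} {s R : Fin (d+1) → ℕ}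
    (X : (∀ i, Fin (s i)) → ℝ) (A : ∀ l, Fin (s l) → Fin (R l) → ℝ)
    (hA : ∀ l, ∀ k k' : Fin (R l), ∑ i, A l i k * A l i k' = if k = k' then (1:ℝ) else 0)
    {E : Finset (Fin (d+1))} (h0 : (0 : Fin (d+1)) ∈ E) :
    tnorm (partialContract X A E) ≤ tnorm X := by
  refine Real.sSup_le ?_ (tnorm_nonneg' X)
  rintro r ⟨x, hx, rfl⟩
  rw [partialContract_eq, gmap_multiProd, vnorm_matvec_pcMat_zero A h0]
  set y : ∀ l, Fin (s l) → ℝ := fun l b => ∑ a, pcMat A E l a b * x l a with hy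
  refine le_tnorm X ?_
  intro l hl
  by_cases hmem : l ∈ E
  · have : y l = fun b => x l (Fin.cast (show keepDims s R E l = s l by
        simp [keepDims, hmem]).symm b) := by
      funext b
      rw [hy]
      simp only [pcMat, dif_pos hmem]
      exact sum_ite_cast _ (x l) b
    rw [this, vnorm_comp_cast]
    exact hx l hl
  · have hcast : keepDims s R E l = R l := by simp [keepDims, hmem]
    have : y l = fun b => ∑ a' : Fin (R l), A l b a' * x l (Fin.cast hcast.symm a') := by
      funext b
      rw [hy]
      simp only [pcMat, dif_neg hmem]
      exact Fintype.sum_equiv (finCongr hcast) _ _ (fun a => rfl)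
    rw [this]
    have := vnorm_matvec_orth (hA l) (fun a' => x l (Fin.cast hcast.symm a'))
    unfold matvec at this
    rw [this, vnorm_comp_cast]
    exact hx l hl

/-- The key reverse bound: `‖X̃‖₂ ≤ ‖X̃ ×₂ A₂ᵀ ⋯ ×_N A_Nᵀ‖₂` for a Tucker tensor `X̃`. -/
lemma tnorm_multiProd_le_pc {d : ℕ} {s R : Fin (d+1) → ℕ}
    (G : (∀ l, Fin (R l)) → ℝ) (A : ∀ l, Fin (s l) → Fin (R l) → ℝ)
    (hA : ∀ l, ∀ k k' : Fin (R l), ∑ i, A l i k * A l i k' = if k = k' then (1:ℝ) else 0) :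
    tnorm (multiProd G A)
      ≤ tnorm (partialContract (multiProd G A) A ({0} : Finset (Fin (d+1)))) := by
  classical
  set E : Finset (Fin (d+1)) := {0} with hE
  have h0 : (0 : Fin (d+1)) ∈ E := Finset.mem_singleton_self 0
  set Z := partialContract (multiProd G A) A E with hZ
  -- Step A : tnorm G ≤ tnorm Z
  have stepA : tnorm G ≤ tnorm Z := by
    refine Real.sSup_le ?_ (tnorm_nonneg' Z)
    rintro r ⟨u, hu, rfl⟩
    have hcast : ∀ l : Fin (d+1), l ∉ E → keepDims s R E l = R l := by
      intro l hl; simp [keepDims, hl]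
    set x : ∀ l, Fin (keepDims s R E l) → ℝ := fun l a =>
      if h : l ∈ E then 0 else u l (Fin.cast (hcast l h) a) with hxdef
    have hxunit : unitInputs x := by
      intro l hl
      have hmem : l ∉ E := by
        rw [hE]; simp [Finset.mem_singleton, hl]
      have : x l = fun a => u l (Fin.cast (hcast l hmem) a) := by
        funext a
        show (if h : l ∈ E then 0 else u l (Fin.cast (hcast l h) a)) = _
        rw [dif_neg hmem]
      rw [this, vnorm_comp_cast]
      exact hu l hl
    have hval : vnorm (gmap Z x) = vnorm (gmap G u) := by
      rw [hZ, partialContract_eq, gmap_multiProd, vnorm_matvec_pcMat_zero A h0,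
        gmap_multiProd, vnorm_matvec_orth (hA 0)]
      congr 1
      apply gmap_congr_right
      intro l hl
      have hmem : l ∉ E := by
        rw [hE]; simp [Finset.mem_singleton, hl]
      funext c
      -- w l c = ∑ b, A l b c * y l b where y l b = ∑ a, pcMat … * x l a
      have hyl : ∀ b : Fin (s l), (∑ a, pcMat A E l a b * x l a)
          = ∑ a' : Fin (R l), A l b a' * u l a' := by
        intro b
        simp only [pcMat, dif_neg hmem, hxdef]
        exact Fintype.sum_equiv (finCongr (hcast l hmem)) _ _ (fun a => rfl)
      calc (∑ b, A l b c * ∑ a, pcMat A E l a b * x l a)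
          = ∑ b, A l b c * ∑ a' : Fin (R l), A l b a' * u l a' := by
            refine Finset.sum_congr rfl fun b _ => ?_
            rw [hyl b]
        _ = ∑ a' : Fin (R l), u l a' * ∑ b, A l b c * A l b a' := by
            simp only [Finset.mul_sum]
            rw [Finset.sum_comm]
            exact Finset.sum_congr rfl fun a' _ =>
              Finset.sum_congr rfl fun b _ => by ring
        _ = u l c := by
            simp only [hA l]
            simp [mul_ite, Finset.sum_ite_eq]
    rw [← hval]
    exact le_tnorm Z hxunit
  -- Step B : tnorm (multiProd G A) ≤ tnorm G
  have stepB : tnorm (multiProd G A) ≤ tnorm G := by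
    refine Real.sSup_le ?_ (tnorm_nonneg' G)
    rintro r ⟨y, hy, rfl⟩
    rw [gmap_multiProd, vnorm_matvec_orth (hA 0)]
    refine vnorm_gmap_le_of_subunit G ?_
    intro l hl
    calc vnorm (fun b => ∑ a, A l a b * y l a) ≤ vnorm (y l) := vnorm_transpose_le (hA l) _
      _ = 1 := hy l hl
  exact stepB.trans stepA

/-- `partialContract` is linear in the tensor argument (difference version). -/
lemma partialContract_sub {d : ℕ} {s R : Fin (d+1) → ℕ}
    (U V : (∀ i, Fin (s i)) → ℝ) (A : ∀ l, Fin (s l) → Fin (R l) → ℝ)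
    (E : Finset (Fin (d+1))) :
    partialContract (fun k => U k - V k) A E
      = fun j => partialContract U A E j - partialContract V A E j := by
  funext j
  simp only [partialContract_eq, multiProd]
  rw [← Finset.sum_sub_distrib]
  exact Finset.sum_congr rfl fun k _ => by ring

end Aux

/-- key norm bounds in the proof of Theorem 4.5 of the paper.
`X` is an order-`N` tensor (`N = d+1`, mode `0` playing the role of mode 1),
`G` a core tensor with `R l ≤ s l`, each `A l` has orthonormal columns, and the Tucker
residual satisfies `‖X − G ×₁ A¹ ⋯ ×_N A^N‖₂ ≤ (1/3)‖X‖₂`.  With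
`Y¹ = X ×₂ A²ᵀ ⋯ ×_N A^Nᵀ` (all modes but `0` contracted) and `Y^{i,j,1}` obtained by
contracting all modes except `0, i, j`:  `‖Y¹‖₂ ≥ (1/3)‖X‖₂` and `‖Y^{i,j,1}‖₂ ≤ (5/3)‖X‖₂`. -/
theorem tucker_Y_norm_bounds {d : ℕ} {s R : Fin (d+1) → ℕ}
    (X : (∀ l, Fin (s l)) → ℝ) (G : (∀ l, Fin (R l)) → ℝ)
    (A : ∀ l, Fin (s l) → Fin (R l) → ℝ)
    (hR : ∀ l, R l ≤ s l)
    (hA : ∀ l, ∀ k k' : Fin (R l), ∑ i, A l i k * A l i k' = if k = k' then (1:ℝ) else 0)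
    (i j : Fin (d+1)) (hi : i ≠ 0) (hj : j ≠ 0) (hij : i ≠ j)
    (hres : tnorm (fun k => X k - multiProd G A k) ≤ (1/3) * tnorm X) :
    (1/3) * tnorm X ≤ tnorm (partialContract X A {0}) ∧
    tnorm (partialContract X A ({0, i, j} : Finset (Fin (d+1)))) ≤ (5/3) * tnorm X := by
  classical
  have h00 : (0 : Fin (d+1)) ∈ ({0} : Finset (Fin (d+1))) := Finset.mem_singleton_self _
  have h0ij : (0 : Fin (d+1)) ∈ ({0, i, j} : Finset (Fin (d+1))) := Finset.mem_insert_self _ _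
  have hXnn : 0 ≤ tnorm X := tnorm_nonneg' X
  constructor
  · -- lower bound for Y¹
    set Res : (∀ l, Fin (s l)) → ℝ := fun k => X k - multiProd G A k with hResdef
    have htri : tnorm X ≤ tnorm (multiProd G A) + tnorm Res := by
      have hXeq : X = fun k => multiProd G A k + Res k := by
        funext k; rw [hResdef]; ring
      calc tnorm X = tnorm (fun k => multiProd G A k + Res k) := by rw [← hXeq]
        _ ≤ tnorm (multiProd G A) + tnorm Res := tnorm_add_le _ _
    have h3 := tnorm_multiProd_le_pc G A hA
    have hZsplit : partialContract (multiProd G A) A ({0} : Finset (Fin (d+1)))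
        = fun jj => partialContract X A ({0} : Finset (Fin (d+1))) jj
            - partialContract Res A ({0} : Finset (Fin (d+1))) jj := by
      have hmp : (fun k => X k - Res k) = multiProd G A := by
        funext k; rw [hResdef]; ring
      rw [← hmp, partialContract_sub]
    have h4 : tnorm (partialContract (multiProd G A) A ({0} : Finset (Fin (d+1))))
        ≤ tnorm (partialContract X A ({0} : Finset (Fin (d+1))))
          + tnorm (partialContract Res A ({0} : Finset (Fin (d+1)))) := by
      rw [hZsplit]
      have heq : (fun jj => partialContract X A ({0} : Finset (Fin (d+1))) jj
            - partialContract Res A ({0} : Finset (Fin (d+1))) jj)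
          = fun jj => partialContract X A ({0} : Finset (Fin (d+1))) jj
            + (fun kk => - partialContract Res A ({0} : Finset (Fin (d+1))) kk) jj := by
        funext jj; ring
      rw [heq]
      refine (tnorm_add_le _ _).trans ?_
      rw [tnorm_neg]
    have h5 : tnorm (partialContract Res A ({0} : Finset (Fin (d+1)))) ≤ tnorm Res :=
      tnorm_partialContract_le Res A hA h00
    linarith
  · -- upper bound for Y^{i,j,1}
    have h1 := tnorm_partialContract_le X A hA h0ij
    linarith
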